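/- For any x, y ∈ H, n < ω and α < Λ: x S_n^α y holds if and only if x R_n^α y holds, i.e., the transfinite iterates of the accessibility relation agree on H whether computed in the frame H or in the larger frame I. -/

import Mathlib

open Ordinal

noncomputable def e1 (a : Ordinal) : Ordinal := omega0 ^ a - 1

noncomputable def eIter : ℕ → Ordinal → Ordinal
  | 0 => id
  | n + 1 => e1 ∘ eIter n

/-- Ordinal logarithm: exponent of the least term in the Cantor normal form. -/
noncomputable def ell (o : Ordinal) : Ordinal := (Ordinal.CNF omega0 o).getLast?.elim 0 Prod.fst

/-- Ignatiev (ℓ-)sequences. -/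
def IsIgnatiev (x : ℕ → Ordinal) : Prop := ∀ i, x (i + 1) ≤ ell (x i)

/-- The domain of Ignatiev's frame below Λ. -/
def Iset (Λ : Ordinal) : Set (ℕ → Ordinal) := {x | IsIgnatiev x ∧ ∀ i, x i < Λ}

/-- Finitely supported Ignatiev sequences below Λ. -/
def Hset (Λ : Ordinal) : Set (ℕ → Ordinal) := {x | x ∈ Iset Λ ∧ ∃ j, x j = 0}

/-- The accessibility relations. -/
def Rrel (n : ℕ) (x y : ℕ → Ordinal) : Prop :=
  (∀ m ≤ n, y m < x m) ∧ ∀ i, n < i → y i ≤ x i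

/-- Transfinite iterates of the accessibility relation, with witnesses in `D`. -/
noncomputable def Iter (D : Set (ℕ → Ordinal)) (n : ℕ) :
    Ordinal → (ℕ → Ordinal) → (ℕ → Ordinal) → Prop :=
  Ordinal.lt_wf.fix fun α rec x y =>
    if α = 0 then x = y
    else ∀ β, ∀ h : β < α, ∃ z ∈ D, Rrel n x z ∧ rec β h z y

inductive Formula : Type 1 where
  | top : Formula
  | and : Formula → Formula → Formula
  | dia : ℕ → Ordinal → Formula → Formula

def Formula.Bounded (Λ : Ordinal) : Formula → Prop
  | .top => True
  | .and φ ψ => φ.Bounded Λ ∧ ψ.Bounded Λ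
  | .dia _ a φ => a < Λ ∧ φ.Bounded Λ

/-- Forcing over the frame with domain `D`. -/
noncomputable def Forces (D : Set (ℕ → Ordinal)) : (ℕ → Ordinal) → Formula → Prop
  | _, .top => True
  | x, .and φ ψ => Forces D x φ ∧ Forces D x ψ
  | x, .dia n a φ => ∃ y ∈ D, Iter D n a x y ∧ Forces D y φ

/-- Monomial normal forms, coded as lists of (base, exponent) pairs. -/
def MNFc (Λ : Ordinal) (L : List (ℕ × Ordinal)) : Prop :=
  L.Chain' (fun p q => p.1 < q.1) ∧ (∀ p ∈ L, 0 < p.2 ∧ p.2 < Λ) ∧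
    L.Chain' (fun p q => ∃ δ < Λ, p.2 = eIter (q.1 - p.1) q.2 * (2 + δ))

/-- The formula coded by an MNF code. -/
def toFormula : List (ℕ × Ordinal) → Formula
  | [] => .top
  | p :: L => .and (.dia p.1 p.2 .top) (toFormula L)

/-- The projections π of an MNF, i.e. the translated Ignatiev sequence x_ψ. -/
noncomputable def proj : List (ℕ × Ordinal) → ℕ → Ordinal
  | [], _ => 0
  | (n, a) :: L, m => if m ≤ n then eIter (n - m) a else proj L m

lemma Iter_unfold (D : Set (ℕ → Ordinal)) (n : ℕ) (α : Ordinal) (x y : ℕ → Ordinal) :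
    Iter D n α x y ↔
      if α = 0 then x = y
      else ∀ β, β < α → ∃ z ∈ D, Rrel n x z ∧ Iter D n β z y := by
  unfold Iter
  rw [Ordinal.lt_wf.fix_eq]

lemma ell_zero : ell 0 = 0 := by
  simp [ell, Ordinal.CNF.zero_right]

lemma Hset_eventually_zero {Λ : Ordinal} {x : ℕ → Ordinal} (hx : x ∈ Hset Λ) :
    ∃ j, ∀ i, j ≤ i → x i = 0 := by
  obtain ⟨⟨hig, _⟩, j, hj⟩ := hx
  refine ⟨j, fun i hi => ?_⟩
  induction i with
  | zero => simpa [Nat.le_zero.mp hi] using hj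
  | succ k IH =>
    rcases Nat.lt_or_ge j (k + 1) with h | h
    · have hk : x k = 0 := IH (by omega)
      have := hig k
      rw [hk, ell_zero] at this
      exact le_antisymm this zero_le
    · have : j = k + 1 := le_antisymm hi h
      rwa [← this]

lemma Rrel_mem_Hset {Λ : Ordinal} {n : ℕ} {x z : ℕ → Ordinal}
    (hx : x ∈ Hset Λ) (hz : z ∈ Iset Λ) (hR : Rrel n x z) : z ∈ Hset Λ := by
  obtain ⟨j, hj⟩ := Hset_eventually_zero hx
  refine ⟨hz, max j (n + 1), ?_⟩
  have h1 : z (max j (n + 1)) ≤ x (max j (n + 1)) := hR.2 _ (by omega)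
  have h2 : x (max j (n + 1)) = 0 := hj _ (le_max_left _ _)
  rw [h2] at h1
  exact le_antisymm h1 zero_le

theorem iter_S_iff_R (Λ : Ordinal) (hpos : 0 < Λ) (heps : Ordinal.omega0 ^ Λ = Λ)
    (n : ℕ) (α : Ordinal) (hα : α < Λ) (x y : ℕ → Ordinal)
    (hx : x ∈ Hset Λ) (hy : y ∈ Hset Λ) :
    Iter (Hset Λ) n α x y ↔ Iter (Iset Λ) n α x y := by
  clear hα
  induction α using Ordinal.induction generalizing x with
  | h α IH =>
    rw [Iter_unfold, Iter_unfold]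
    by_cases h0 : α = 0
    · simp [h0]
    · simp only [h0, if_false]
      constructor
      · intro h β hβ
        obtain ⟨z, hzH, hR, hIt⟩ := h β hβ
        exact ⟨z, hzH.1, hR, (IH β hβ z hzH).mp hIt⟩
      · intro h β hβ
        obtain ⟨z, hzI, hR, hIt⟩ := h β hβ
        have hzH : z ∈ Hset Λ := Rrel_mem_Hset hx hzI hR
        exact ⟨z, hzH, hR, (IH β hβ z hzH).mpr hIt⟩
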